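/- arXiv:0902.4257 — 2 statements merged into one kernel-verified Lean document; each statement's English description precedes it below -/
import Mathlib

section
/- Let X be a complex Banach space which is M-embedded and let Y be a closed subspace of X. Then the quotient space X/Y is M-embedded, i.e., the annihilator of the canonical image of X/Y in (X/Y)*** is an L-summand in (X/Y)***. -/
namespace NormedSpace

/-- The topological dual `E →L[𝕜] 𝕜` (as `NormedSpace.Dual` was in the older Mathlib). -/
abbrev Dual (𝕜 : Type*) [NontriviallyNormedField 𝕜] (E : Type*) [SeminormedAddCommGroup E]
    [NormedSpace 𝕜 E] : Type _ := E →L[𝕜] 𝕜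

end NormedSpace

open NormedSpace

noncomputable section

set_option maxHeartbeats 1000000

/-- The transpose (dual map) of a continuous linear map between (semi)normed spaces:
`ctranspose f` sends a functional `g` to `g ∘ f`. -/
def ctranspose {E F : Type*} [SeminormedAddCommGroup E] [NormedSpace ℂ E]
    [SeminormedAddCommGroup F] [NormedSpace ℂ F] (f : E →L[ℂ] F) :
    Dual ℂ F →L[ℂ] Dual ℂ E :=
  (ContinuousLinearMap.compL ℂ E F ℂ).flip f

/-- A bounded linear projection `P` is an L-projection if `‖z‖ = ‖P z‖ + ‖z - P z‖`
for all `z`. -/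
def IsLProjection {Z : Type*} [SeminormedAddCommGroup Z] [NormedSpace ℂ Z]
    (P : Z →L[ℂ] Z) : Prop :=
  (∀ z, P (P z) = P z) ∧ ∀ z, ‖z‖ = ‖P z‖ + ‖z - P z‖

/-- A complex Banach space `X` is M-embedded if the annihilator `i_X(X)^⊥` is an
L-summand in `X***`. -/
def MEmbedded (X : Type*) [SeminormedAddCommGroup X] [NormedSpace ℂ X] : Prop :=
  ∃ P : Dual ℂ (Dual ℂ (Dual ℂ X)) →L[ℂ] Dual ℂ (Dual ℂ (Dual ℂ X)),
    IsLProjection P ∧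
    Set.range P = {φ : Dual ℂ (Dual ℂ (Dual ℂ X)) |
      ∀ x : X, φ (inclusionInDoubleDual ℂ X x) = 0}

section Aux

lemma ctranspose_apply {E F : Type*} [SeminormedAddCommGroup E] [NormedSpace ℂ E]
    [SeminormedAddCommGroup F] [NormedSpace ℂ F] (f : E →L[ℂ] F) (g : Dual ℂ F) (x : E) :
    ctranspose f g x = g (f x) := rfl

lemma ctranspose_norm_le {E F : Type*} [SeminormedAddCommGroup E] [NormedSpace ℂ E]
    [SeminormedAddCommGroup F] [NormedSpace ℂ F] (f : E →L[ℂ] F)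
    (hf : ∀ x, ‖f x‖ ≤ ‖x‖) (g : Dual ℂ F) : ‖ctranspose f g‖ ≤ ‖g‖ := by
  refine ContinuousLinearMap.opNorm_le_bound _ (norm_nonneg _) fun x => ?_
  calc ‖ctranspose f g x‖ = ‖g (f x)‖ := rfl
    _ ≤ ‖g‖ * ‖f x‖ := g.le_opNorm _
    _ ≤ ‖g‖ * ‖x‖ := by gcongr; exact hf x

/-- The canonical projection `π : E*** → E***`, `φ ↦ i_{E*}(φ ∘ i_E)`. -/
def canProj (E : Type*) [SeminormedAddCommGroup E] [NormedSpace ℂ E] :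
    Dual ℂ (Dual ℂ (Dual ℂ E)) →L[ℂ] Dual ℂ (Dual ℂ (Dual ℂ E)) :=
  (inclusionInDoubleDual ℂ (Dual ℂ E)).comp (ctranspose (inclusionInDoubleDual ℂ E))

lemma canProj_apply {E : Type*} [SeminormedAddCommGroup E] [NormedSpace ℂ E]
    (φ : Dual ℂ (Dual ℂ (Dual ℂ E))) (Φ : Dual ℂ (Dual ℂ E)) :
    canProj E φ Φ = Φ (ctranspose (inclusionInDoubleDual ℂ E) φ) := rfl

lemma canProj_inclusion {E : Type*} [SeminormedAddCommGroup E] [NormedSpace ℂ E]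
    (φ : Dual ℂ (Dual ℂ (Dual ℂ E))) (x : E) :
    canProj E φ (inclusionInDoubleDual ℂ E x) = φ (inclusionInDoubleDual ℂ E x) := rfl

lemma canProj_idem {E : Type*} [SeminormedAddCommGroup E] [NormedSpace ℂ E]
    (φ : Dual ℂ (Dual ℂ (Dual ℂ E))) :
    canProj E (canProj E φ) = canProj E φ := rfl

lemma canProj_eq_zero {E : Type*} [SeminormedAddCommGroup E] [NormedSpace ℂ E]
    (φ : Dual ℂ (Dual ℂ (Dual ℂ E)))
    (h : ∀ x : E, φ (inclusionInDoubleDual ℂ E x) = 0) : canProj E φ = 0 := by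
  have h0 : ctranspose (inclusionInDoubleDual ℂ E) φ = 0 := by
    ext x; exact h x
  show (inclusionInDoubleDual ℂ (Dual ℂ E)) (ctranspose (inclusionInDoubleDual ℂ E) φ) = 0
  rw [h0, map_zero]

end Aux

/-- The quotient of an M-embedded complex Banach space by a closed subspace is
M-embedded. -/
theorem MEmbedded.quotient
    (X : Type*) [NormedAddCommGroup X] [NormedSpace ℂ X] [CompleteSpace X]
    (hX : MEmbedded X) (Y : Subspace ℂ X) [IsClosed (Y : Set X)] :
    MEmbedded (X ⧸ Y) := by
  obtain ⟨P, ⟨hPidem, hPL⟩, hPrange⟩ := hX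
  -- the continuous quotient map
  set q : X →L[ℂ] X ⧸ Y :=
    Y.mkQ.mkContinuous 1 (fun x => by
      simpa using Submodule.Quotient.norm_mk_le (S := Y) x) with hq_def
  have hq_apply : ∀ x : X, q x = Submodule.Quotient.mk x := fun x => rfl
  have hq_norm : ∀ x : X, ‖q x‖ ≤ ‖x‖ := fun x =>
    Submodule.Quotient.norm_mk_le (S := Y) x
  -- q* is an isometry
  have hq1 : ∀ ψ : Dual ℂ (X ⧸ Y), ‖ctranspose q ψ‖ = ‖ψ‖ := by
    intro ψ
    refine le_antisymm (ctranspose_norm_le q hq_norm ψ) ?_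
    refine ContinuousLinearMap.opNorm_le_bound _ (norm_nonneg _) fun z => ?_
    set C := ‖ctranspose q ψ‖ with hC
    have hC0 : 0 ≤ C := norm_nonneg _
    refine le_of_forall_pos_le_add fun ε hε => ?_
    obtain ⟨x, hx, hxn⟩ := Submodule.Quotient.norm_mk_lt (S := Y) z
      (show (0:ℝ) < ε / (C + 1) by positivity)
    have hzx : ψ z = ctranspose q ψ x := by
      rw [← hx]; rfl
    calc ‖ψ z‖ = ‖ctranspose q ψ x‖ := by rw [hzx]
      _ ≤ C * ‖x‖ := (ctranspose q ψ).le_opNorm x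
      _ ≤ C * (‖z‖ + ε / (C + 1)) := mul_le_mul_of_nonneg_left hxn.le hC0
      _ = C * ‖z‖ + C * (ε / (C + 1)) := by ring
      _ ≤ C * ‖z‖ + ε := by
          gcongr
          rw [mul_div_assoc']
          rw [div_le_iff₀ (by positivity)]
          nlinarith
  -- q** is surjective with norm control (Hahn–Banach)
  have hq2 : ∀ Ψ : Dual ℂ (Dual ℂ (X ⧸ Y)), ∃ g : Dual ℂ (Dual ℂ X),
      ctranspose (ctranspose q) g = Ψ ∧ ‖g‖ ≤ ‖Ψ‖ := by
    intro Ψ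
    have hinj : Function.Injective (ctranspose q) := by
      intro a b hab
      have h1 : ‖a - b‖ = 0 := by
        rw [← hq1 (a - b), map_sub, hab, sub_self, norm_zero]
      exact sub_eq_zero.mp (norm_eq_zero.mp h1)
    set p : Subspace ℂ (Dual ℂ X) := LinearMap.range ((ctranspose q) : Dual ℂ (X ⧸ Y) →ₗ[ℂ] Dual ℂ X) with hp
    set e := LinearEquiv.ofInjective ((ctranspose q) : Dual ℂ (X ⧸ Y) →ₗ[ℂ] Dual ℂ X) hinj with he
    have hcoe : ∀ ψ : Dual ℂ (X ⧸ Y), ((e ψ : p) : Dual ℂ X) = ctranspose q ψ := by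
      intro ψ; rfl
    have hnorm_symm : ∀ v : p, ‖e.symm v‖ = ‖(v : Dual ℂ X)‖ := by
      intro v
      have h1 : ((e (e.symm v) : p) : Dual ℂ X) = (v : Dual ℂ X) := by
        rw [e.apply_symm_apply]
      rw [← h1, hcoe, hq1]
    set f₀ : p →ₗ[ℂ] ℂ := Ψ.toLinearMap.comp e.symm.toLinearMap with hf₀
    have hbound : ∀ v : p, ‖f₀ v‖ ≤ ‖Ψ‖ * ‖v‖ := by
      intro v
      calc ‖f₀ v‖ = ‖Ψ (e.symm v)‖ := rfl
        _ ≤ ‖Ψ‖ * ‖e.symm v‖ := Ψ.le_opNorm _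
        _ = ‖Ψ‖ * ‖(v : Dual ℂ X)‖ := by rw [hnorm_symm]
        _ = ‖Ψ‖ * ‖v‖ := rfl
    set f : p →L[ℂ] ℂ := @LinearMap.mkContinuous ℂ ℂ p ℂ _ _ _ _ _ _ (RingHom.id ℂ) f₀ ‖Ψ‖ hbound with hf
    obtain ⟨g, hg, hgn⟩ := exists_extension_norm_eq p f
    refine ⟨g, ?_, ?_⟩
    · ext ψ
      have hmem : ctranspose q ψ ∈ p := ⟨ψ, rfl⟩
      have h1 : ctranspose (ctranspose q) g ψ = g (ctranspose q ψ) := rfl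
      have h2 : g (ctranspose q ψ) = f ⟨ctranspose q ψ, hmem⟩ := hg ⟨ctranspose q ψ, hmem⟩
      have h3 : e.symm ⟨ctranspose q ψ, hmem⟩ = ψ := by
        apply e.injective
        rw [e.apply_symm_apply]
        exact Subtype.ext (hcoe ψ).symm
      have h4 : f ⟨ctranspose q ψ, hmem⟩ = Ψ (e.symm ⟨ctranspose q ψ, hmem⟩) := rfl
      rw [h1, h2, h4, h3]
    · rw [hgn]
      apply ContinuousLinearMap.opNorm_le_bound
      · exact norm_nonneg Ψ
      · intro v; exact hbound v
  -- the triple transpose T : (X/Y)*** → X***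
  set T : Dual ℂ (Dual ℂ (Dual ℂ (X ⧸ Y))) →L[ℂ] Dual ℂ (Dual ℂ (Dual ℂ X)) :=
    ctranspose (ctranspose (ctranspose q)) with hT
  have hq2' : ∀ Φ : Dual ℂ (Dual ℂ X), ‖ctranspose (ctranspose q) Φ‖ ≤ ‖Φ‖ :=
    fun Φ => ctranspose_norm_le _ (fun ψ => (hq1 ψ).le) Φ
  have hTiso : ∀ φ : Dual ℂ (Dual ℂ (Dual ℂ (X ⧸ Y))), ‖T φ‖ = ‖φ‖ := by
    intro φ
    refine le_antisymm (ctranspose_norm_le _ hq2' φ) ?_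
    refine ContinuousLinearMap.opNorm_le_bound _ (norm_nonneg _) fun Ψ => ?_
    obtain ⟨g, hg, hgn⟩ := hq2 Ψ
    calc ‖φ Ψ‖ = ‖T φ g‖ := by rw [← hg]; rfl
      _ ≤ ‖T φ‖ * ‖g‖ := (T φ).le_opNorm g
      _ ≤ ‖T φ‖ * ‖Ψ‖ := by gcongr
  -- naturality: π_X ∘ T = T ∘ π_Q
  have hnat : ∀ φ, canProj X (T φ) = T (canProj (X ⧸ Y) φ) := by
    intro φ; rfl
  -- P agrees with Id - canProj X
  have hPi : ∀ ψ : Dual ℂ X, P (inclusionInDoubleDual ℂ (Dual ℂ X) ψ) = 0 := by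
    intro ψ
    set iψ := inclusionInDoubleDual ℂ (Dual ℂ X) ψ with hiψ
    have hmem : P iψ ∈ Set.range P := ⟨iψ, rfl⟩
    rw [hPrange] at hmem
    have h1 : ‖ψ‖ ≤ ‖iψ - P iψ‖ := by
      refine ContinuousLinearMap.opNorm_le_bound _ (by positivity) fun x => ?_
      have h2 : ψ x = (iψ - P iψ) (inclusionInDoubleDual ℂ X x) := by
        rw [ContinuousLinearMap.sub_apply, hmem x, sub_zero]
        exact (dual_def ℂ X x ψ).symm ▸ rfl
      calc ‖ψ x‖ = ‖(iψ - P iψ) (inclusionInDoubleDual ℂ X x)‖ := by rw [h2]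
        _ ≤ ‖iψ - P iψ‖ * ‖inclusionInDoubleDual ℂ X x‖ := ContinuousLinearMap.le_opNorm _ _
        _ ≤ ‖iψ - P iψ‖ * ‖x‖ := by gcongr; exact double_dual_bound ℂ X x
    have hnorm : ‖iψ‖ = ‖ψ‖ := (inclusionInDoubleDualLi ℂ (E := Dual ℂ X)).norm_map ψ
    have hL := hPL iψ
    have h3 : ‖P iψ‖ ≤ 0 := by rw [hnorm] at hL; linarith
    ext Φ
    have h5 : ‖P iψ Φ‖ ≤ 0 := by
      calc ‖P iψ Φ‖ ≤ ‖P iψ‖ * ‖Φ‖ := (P iψ).le_opNorm Φ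
        _ ≤ 0 * ‖Φ‖ := mul_le_mul_of_nonneg_right h3 (norm_nonneg _)
        _ = 0 := zero_mul _
    simpa using norm_le_zero_iff.mp h5
  have hPfix : ∀ χ : Dual ℂ (Dual ℂ (Dual ℂ X)),
      (∀ x : X, χ (inclusionInDoubleDual ℂ X x) = 0) → P χ = χ := by
    intro χ hχ
    have : χ ∈ Set.range P := by rw [hPrange]; exact hχ
    obtain ⟨w, hw⟩ := this
    rw [← hw, hPidem]
  have hPkey : ∀ φ : Dual ℂ (Dual ℂ (Dual ℂ X)), P φ = φ - canProj X φ := by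
    intro φ
    have hann : ∀ x : X, (φ - canProj X φ) (inclusionInDoubleDual ℂ X x) = 0 := by
      intro x
      simp only [ContinuousLinearMap.sub_apply, canProj_inclusion, sub_self]
    have hsplit : φ = canProj X φ + (φ - canProj X φ) := by abel
    calc P φ = P (canProj X φ + (φ - canProj X φ)) := by rw [← hsplit]
      _ = P (canProj X φ) + P (φ - canProj X φ) := map_add _ _ _
      _ = 0 + (φ - canProj X φ) := by
          rw [hPfix _ hann]
          congr 1
          exact hPi (ctranspose (inclusionInDoubleDual ℂ X) φ)
      _ = φ - canProj X φ := zero_add _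
  have hLX : ∀ φ : Dual ℂ (Dual ℂ (Dual ℂ X)),
      ‖φ‖ = ‖φ - canProj X φ‖ + ‖canProj X φ‖ := by
    intro φ
    have := hPL φ
    rw [hPkey φ, sub_sub_cancel] at this
    exact this
  -- the L-projection on (X/Y)***
  refine ⟨ContinuousLinearMap.id ℂ _ - canProj (X ⧸ Y), ⟨?_, ?_⟩, ?_⟩
  · intro z
    simp only [ContinuousLinearMap.sub_apply, ContinuousLinearMap.id_apply, map_sub,
      canProj_idem]
    abel
  · intro z
    simp only [ContinuousLinearMap.sub_apply, ContinuousLinearMap.id_apply,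
      sub_sub_cancel]
    calc ‖z‖ = ‖T z‖ := (hTiso z).symm
      _ = ‖T z - canProj X (T z)‖ + ‖canProj X (T z)‖ := hLX (T z)
      _ = ‖T (z - canProj (X ⧸ Y) z)‖ + ‖T (canProj (X ⧸ Y) z)‖ := by
          rw [hnat, ← map_sub]
      _ = ‖z - canProj (X ⧸ Y) z‖ + ‖canProj (X ⧸ Y) z‖ := by rw [hTiso, hTiso]
  · ext φ
    simp only [Set.mem_range, Set.mem_setOf_eq]
    constructor
    · rintro ⟨w, rfl⟩ z
      simp only [ContinuousLinearMap.sub_apply, ContinuousLinearMap.id_apply]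
      simp only [ContinuousLinearMap.sub_apply, canProj_inclusion, sub_self]
    · intro hφ
      refine ⟨φ, ?_⟩
      simp only [ContinuousLinearMap.sub_apply, ContinuousLinearMap.id_apply]
      rw [canProj_eq_zero φ hφ, sub_zero]
end
end

section
/- Let X be a complex Banach space. Then the following are equivalent: (i) the canonical projection π_{X*} is the only contractive linear projection on X*** whose kernel is i_X(X)^⊥; (ii) the only contractive linear operator T on X** satisfying T(i_X(x)) = i_X(x) for all x ∈ X is the identity operator on X**; (iii) for every surjective linear isometry U : X → X, the only contractive linear operator T on X** satisfying T ∘ i_X = i_X ∘ U is U**, the double transpose of U. -/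
open NormedSpace

noncomputable section

set_option maxHeartbeats 1000000

section Helpers

variable {E F : Type*} [SeminormedAddCommGroup E] [NormedSpace ℂ E]
    [SeminormedAddCommGroup F] [NormedSpace ℂ F]

lemma ct_apply (f : E →L[ℂ] F) (g : Dual ℂ F) (x : E) : ctranspose f g x = g (f x) := rfl

lemma ct_norm_le (f : E →L[ℂ] F) : ‖ctranspose f‖ ≤ ‖f‖ := by
  apply ContinuousLinearMap.opNorm_le_bound _ (norm_nonneg f)
  intro g
  calc ‖ctranspose f g‖ = ‖g.comp f‖ := rfl
    _ ≤ ‖g‖ * ‖f‖ := ContinuousLinearMap.opNorm_comp_le _ _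
    _ = ‖f‖ * ‖g‖ := mul_comm _ _

end Helpers

/-- For a complex Banach space `X`, the following are equivalent:
(i) the canonical projection `π_{X*} = i_{X*} ∘ (i_X)^t` is the only contractive linear
projection on `X***` with kernel `i_X(X)^⊥`;
(ii) the only contractive linear operator on `X**` restricting to the identity on `i_X(X)`
is the identity;
(iii) for every surjective linear isometry `U` of `X`, the only contractive linear operator
`T` on `X**` with `T ∘ i_X = i_X ∘ U` is the double transpose `U**`. -/
theorem unique_extension_property_tfae
    (X : Type*) [NormedAddCommGroup X] [NormedSpace ℂ X] [CompleteSpace X] :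
    ((∀ Q : Dual ℂ (Dual ℂ (Dual ℂ X)) →L[ℂ] Dual ℂ (Dual ℂ (Dual ℂ X)),
        ‖Q‖ ≤ 1 → (∀ φ, Q (Q φ) = Q φ) →
        ({φ : Dual ℂ (Dual ℂ (Dual ℂ X)) | Q φ = 0} =
          {φ : Dual ℂ (Dual ℂ (Dual ℂ X)) | ∀ x : X, φ (inclusionInDoubleDual ℂ X x) = 0}) →
        Q = (inclusionInDoubleDual ℂ (Dual ℂ X)) ∘L
          ctranspose (E := X) (F := Dual ℂ (Dual ℂ X)) (inclusionInDoubleDual ℂ X)) ↔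
      (∀ T : Dual ℂ (Dual ℂ X) →L[ℂ] Dual ℂ (Dual ℂ X), ‖T‖ ≤ 1 →
        (∀ x : X, T (inclusionInDoubleDual ℂ X x) = inclusionInDoubleDual ℂ X x) →
        T = ContinuousLinearMap.id ℂ (Dual ℂ (Dual ℂ X)))) ∧
    ((∀ T : Dual ℂ (Dual ℂ X) →L[ℂ] Dual ℂ (Dual ℂ X), ‖T‖ ≤ 1 →
        (∀ x : X, T (inclusionInDoubleDual ℂ X x) = inclusionInDoubleDual ℂ X x) →
        T = ContinuousLinearMap.id ℂ (Dual ℂ (Dual ℂ X))) ↔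
      (∀ U : X →ₗᵢ[ℂ] X, Function.Surjective U →
        ∀ T : Dual ℂ (Dual ℂ X) →L[ℂ] Dual ℂ (Dual ℂ X), ‖T‖ ≤ 1 →
        (∀ x : X, T (inclusionInDoubleDual ℂ X x) = inclusionInDoubleDual ℂ X (U x)) →
        T = ctranspose (ctranspose U.toContinuousLinearMap))) := by
  set i : X →L[ℂ] Dual ℂ (Dual ℂ X) := inclusionInDoubleDual ℂ X with hi
  set i' : Dual ℂ X →L[ℂ] Dual ℂ (Dual ℂ (Dual ℂ X)) := inclusionInDoubleDual ℂ (Dual ℂ X) with hi'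
  set i'' : Dual ℂ (Dual ℂ X) →L[ℂ] Dual ℂ (Dual ℂ (Dual ℂ (Dual ℂ X))) :=
    inclusionInDoubleDual ℂ (Dual ℂ (Dual ℂ X)) with hi''
  constructor
  · -- (i) ↔ (ii)
    constructor
    · -- (i) → (ii)
      intro h T hT hfix
      -- Q = T^t ∘ π
      set Q : Dual ℂ (Dual ℂ (Dual ℂ X)) →L[ℂ] Dual ℂ (Dual ℂ (Dual ℂ X)) :=
        (ctranspose T) ∘L (i' ∘L ctranspose i) with hQ
      have hQapp : ∀ φ z, Q φ z = T z (φ ∘L i) := by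
        intro φ z
        rfl
      have hπiX : ∀ (φ : Dual ℂ (Dual ℂ (Dual ℂ X))) (x : X),
          ((Q φ) ∘L i) x = (φ ∘L i) x := by
        intro φ x
        have : Q φ (i x) = T (i x) (φ ∘L i) := hQapp φ (i x)
        simp only [ContinuousLinearMap.comp_apply]
        rw [this, hfix x, hi, dual_def]
        rfl
      have hQnorm : ‖Q‖ ≤ 1 := by
        rw [hQ]
        calc ‖(ctranspose T) ∘L (i' ∘L ctranspose i)‖
            ≤ ‖ctranspose T‖ * ‖i' ∘L ctranspose i‖ := ContinuousLinearMap.opNorm_comp_le _ _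
          _ ≤ 1 * 1 := by
              apply mul_le_mul ((ct_norm_le T).trans hT) ?_ (ContinuousLinearMap.opNorm_nonneg _) zero_le_one
              calc ‖i' ∘L ctranspose i‖ ≤ ‖i'‖ * ‖ctranspose i‖ :=
                    ContinuousLinearMap.opNorm_comp_le _ _
                _ ≤ 1 * 1 := mul_le_mul (inclusionInDoubleDual_norm_le ℂ _)
                    ((ct_norm_le i).trans (inclusionInDoubleDual_norm_le ℂ _))
                    (ContinuousLinearMap.opNorm_nonneg _) zero_le_one
                _ = 1 := one_mul 1
          _ = 1 := one_mul 1
      have hproj : ∀ φ, Q (Q φ) = Q φ := by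
        intro φ
        ext z
        rw [hQapp, hQapp]
        congr 1
        ext x
        exact hπiX φ x
      have hker : {φ : Dual ℂ (Dual ℂ (Dual ℂ X)) | Q φ = 0} =
          {φ : Dual ℂ (Dual ℂ (Dual ℂ X)) | ∀ x : X, φ (i x) = 0} := by
        ext φ
        simp only [Set.mem_setOf_eq]
        constructor
        · intro h0 x
          have h1 : Q φ (i x) = 0 := by rw [h0]; rfl
          rw [hQapp, hfix x, hi, dual_def] at h1
          simpa using h1
        · intro h0
          ext z
          rw [hQapp]
          have : φ ∘L i = 0 := by
            ext x; simpa using h0 x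
          rw [this]
          simp
      have hQπ := h Q hQnorm hproj hker
      -- now extract T = id
      ext z f
      have key : Q (i' f) z = (i' ∘L ctranspose i) (i' f) z := by rw [hQπ]
      have h2 : (i' f) ∘L i = f := by
        ext x
        simp only [ContinuousLinearMap.comp_apply, hi', hi, dual_def]
      rw [hQapp] at key
      rw [h2] at key
      have h3 : (i' ∘L ctranspose i) (i' f) z = z f := by
        have hc : (ctranspose i) (i' f) = f := by
          ext x
          rw [ct_apply, hi', dual_def, hi, dual_def]
        rw [ContinuousLinearMap.comp_apply, hc]
        simp only [hi', dual_def]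
      rw [h3] at key
      simpa using key
    · -- (ii) → (i)
      intro h Q hQnorm hproj hker
      -- T z f = Q (i' f) z
      set S : Dual ℂ X →L[ℂ] Dual ℂ (Dual ℂ (Dual ℂ X)) := Q ∘L i' with hS
      set T : Dual ℂ (Dual ℂ X) →L[ℂ] Dual ℂ (Dual ℂ X) := (ctranspose S) ∘L i'' with hT
      have hTapp : ∀ z f, T z f = Q (i' f) z := by intro z f; rfl
      have hTnorm : ‖T‖ ≤ 1 := by
        rw [hT]
        calc ‖(ctranspose S) ∘L i''‖ ≤ ‖ctranspose S‖ * ‖i''‖ :=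
              ContinuousLinearMap.opNorm_comp_le _ _
          _ ≤ 1 * 1 := by
              apply mul_le_mul ?_ (inclusionInDoubleDual_norm_le ℂ _) (ContinuousLinearMap.opNorm_nonneg _) zero_le_one
              refine (ct_norm_le S).trans ?_
              calc ‖S‖ ≤ ‖Q‖ * ‖i'‖ := ContinuousLinearMap.opNorm_comp_le _ _
                _ ≤ 1 * 1 := mul_le_mul hQnorm (inclusionInDoubleDual_norm_le ℂ _)
                    (ContinuousLinearMap.opNorm_nonneg _) zero_le_one
                _ = 1 := one_mul 1
          _ = 1 := one_mul 1
      have hmemker : ∀ f : Dual ℂ X, ∀ x : X, (i' f - Q (i' f)) (i x) = 0 := by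
        intro f x
        have hm : i' f - Q (i' f) ∈ {φ : Dual ℂ (Dual ℂ (Dual ℂ X)) | Q φ = 0} := by
          simp only [Set.mem_setOf_eq, map_sub, hproj, sub_self]
        rw [hker] at hm
        exact hm x
      have hfix : ∀ x : X, T (i x) = i x := by
        intro x
        ext f
        rw [hTapp]
        have := hmemker f x
        have h1 : Q (i' f) (i x) = (i' f) (i x) := by
          have h0 := hmemker f x
          simp only [ContinuousLinearMap.sub_apply] at h0
          exact (sub_eq_zero.mp h0).symm
        rw [h1, hi', dual_def, hi, dual_def]
      have hTid := h T hTnorm hfix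
      have hQi' : ∀ f : Dual ℂ X, Q (i' f) = i' f := by
        intro f
        ext z
        have : T z f = z f := by rw [hTid]; rfl
        rw [hTapp] at this
        rw [this, hi', dual_def]
      -- Q = π
      ext φ z
      have hdiff : ∀ x : X, (φ - i' (φ ∘L i)) (i x) = 0 := by
        intro x
        have hv : (i' (φ ∘L i)) (i x) = φ (i x) := by rw [hi', dual_def]; rfl
        simp [ContinuousLinearMap.sub_apply, hv]
      have hmem : φ - i' (φ ∘L i) ∈ {ψ : Dual ℂ (Dual ℂ (Dual ℂ X)) | Q ψ = 0} := by
        rw [hker]; exact hdiff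
      have h0 : Q φ = Q (i' (φ ∘L i)) := by
        have := hmem
        simp only [Set.mem_setOf_eq, map_sub, sub_eq_zero] at this
        exact this
      rw [h0, hQi']
      rfl
  · -- (ii) ↔ (iii)
    constructor
    · -- (ii) → (iii)
      intro h U hU T hT hcomm
      set e := LinearIsometryEquiv.ofSurjective U hU with he
      set Vc : X →L[ℂ] X := e.symm.toLinearIsometry.toContinuousLinearMap with hVc
      set Uc : X →L[ℂ] X := U.toContinuousLinearMap with hUc
      have heU : ∀ x : X, e x = U x := by intro x; rw [he]; rfl
      have hVU : ∀ x : X, Vc (U x) = x := by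
        intro x
        rw [hVc]
        show e.symm (U x) = x
        rw [← heU x]
        exact e.symm_apply_apply x
      have hUV : ∀ y : X, Uc (Vc y) = y := by
        intro y
        show U (e.symm y) = y
        rw [← heU (e.symm y)]
        exact e.apply_symm_apply y
      set T' : Dual ℂ (Dual ℂ X) →L[ℂ] Dual ℂ (Dual ℂ X) :=
        (ctranspose (ctranspose Vc)) ∘L T with hT'
      have hT'norm : ‖T'‖ ≤ 1 := by
        rw [hT']
        calc ‖(ctranspose (ctranspose Vc)) ∘L T‖ ≤ ‖ctranspose (ctranspose Vc)‖ * ‖T‖ :=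
              ContinuousLinearMap.opNorm_comp_le _ _
          _ ≤ 1 * 1 := by
              apply mul_le_mul ?_ hT (ContinuousLinearMap.opNorm_nonneg _) zero_le_one
              refine ((ct_norm_le _).trans ((ct_norm_le Vc).trans ?_))
              exact e.symm.toLinearIsometry.norm_toContinuousLinearMap_le
          _ = 1 := one_mul 1
      have hT'fix : ∀ x : X, T' (i x) = i x := by
        intro x
        ext f
        show (ctranspose (ctranspose Vc)) (T (i x)) f = i x f
        rw [hcomm x]
        have hl : (ctranspose (ctranspose Vc)) (i (U x)) f = f (Vc (U x)) := rfl
        have hr : i x f = f x := rfl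
        rw [hl, hr, hVU x]
      have hid := h T' hT'norm hT'fix
      -- T = Uc**
      ext ψ f
      have h1 : T' ψ = ψ := by rw [hid]; rfl
      have h2 : (ctranspose (ctranspose Vc)) (T ψ) = ψ := h1
      -- apply Uc** to both sides
      have h3 : (ctranspose (ctranspose Uc)) ((ctranspose (ctranspose Vc)) (T ψ)) =
          (ctranspose (ctranspose Uc)) ψ := by rw [h2]
      have h4 : ∀ (χ : Dual ℂ (Dual ℂ X)),
          (ctranspose (ctranspose Uc)) ((ctranspose (ctranspose Vc)) χ) = χ := by
        intro χ
        ext g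
        show χ ((ctranspose Vc) ((ctranspose Uc) g)) = χ g
        congr 1
        ext y
        show g (Uc (Vc y)) = g y
        rw [hUV y]
      rw [h4 (T ψ)] at h3
      rw [h3]
    · -- (iii) → (ii)
      intro h T hT hfix
      have h1 := h (LinearIsometry.id) Function.surjective_id T hT (by
        intro x
        rw [hfix x]
        rfl)
      rw [h1]
      ext ψ f
      show ψ ((ctranspose LinearIsometry.id.toContinuousLinearMap) f) = ψ f
      congr 1
end
end
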